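/- Let H be a finite-dimensional complex inner product space and H₁,…,Hₙ subspaces with orthogonal projections P₁,…,Pₙ. If there exist real numbers a₀ ≥ 0 and a₁,…,aₙ > 0 with Σₖ aₖ Pₖ = a₀ I, and the collection of projections is irreducible (every operator X commuting with all Pₖ is scalar), then the system of subspaces (H;H₁,…,Hₙ) is brick: every linear endomorphism X of H with X(Hₖ) ⊆ Hₖ for all k is a scalar multiple of the identity. -/

import Mathlib

open scoped ComplexOrder

local notation "⟪" x ", " y "⟫" => @inner ℂ _ _ x y

/-- Trace via an orthonormal basis. -/
lemma trace_eq_sum_inner' {H : Type*} [NormedAddCommGroup H] [InnerProductSpace ℂ H]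
    [FiniteDimensional ℂ H] {ι : Type*} [Fintype ι] [DecidableEq ι]
    (b : OrthonormalBasis ι ℂ H) (f : H →ₗ[ℂ] H) :
    LinearMap.trace ℂ H f = ∑ i, ⟪b i, f (b i)⟫ := by
  rw [LinearMap.trace_eq_matrix_trace ℂ b.toBasis, Matrix.trace]
  congr 1
  ext i
  rw [Matrix.diag_apply, LinearMap.toMatrix_apply, OrthonormalBasis.coe_toBasis_repr_apply,
    OrthonormalBasis.repr_apply_apply, OrthonormalBasis.coe_toBasis]

/-- If the trace of `adjoint C * C` vanishes, then `C = 0`. -/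
lemma eq_zero_of_trace_adjoint_mul_self {H : Type*} [NormedAddCommGroup H]
    [InnerProductSpace ℂ H] [FiniteDimensional ℂ H] (C : H →ₗ[ℂ] H)
    (h : LinearMap.trace ℂ H (LinearMap.adjoint C * C) = 0) : C = 0 := by
  set b := stdOrthonormalBasis ℂ H
  rw [trace_eq_sum_inner' b] at h
  have hterm : ∀ i, ⟪b i, (LinearMap.adjoint C * C) (b i)⟫ = ((‖C (b i)‖ ^ 2 : ℝ) : ℂ) := by
    intro i
    rw [Module.End.mul_apply, LinearMap.adjoint_inner_right, inner_self_eq_norm_sq_to_K]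
    norm_cast
  rw [Finset.sum_congr rfl fun i _ => hterm i, ← Complex.ofReal_sum] at h
  have h' : ∑ i, (‖C (b i)‖ : ℝ) ^ 2 = 0 := by exact_mod_cast h
  have hz : ∀ i ∈ Finset.univ, (‖C (b i)‖ : ℝ) ^ 2 = 0 :=
    (Finset.sum_eq_zero_iff_of_nonneg (fun i _ => sq_nonneg _)).mp h'
  apply b.toBasis.ext
  intro i
  have := hz i (Finset.mem_univ i)
  have : C (b i) = 0 := by
    rw [pow_eq_zero_iff (by norm_num), norm_eq_zero] at this
    exact this
  simpa using this

/-- an irreducible orthoscalar system of subspaces of a finite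
dimensional Hilbert space is brick. -/
theorem irreducible_orthoscalar_is_brick
    (H : Type*) [NormedAddCommGroup H] [InnerProductSpace ℂ H] [FiniteDimensional ℂ H]
    (n : ℕ) (Hs : Fin n → Submodule ℂ H) (a₀ : ℝ) (a : Fin n → ℝ)
    (ha₀ : 0 ≤ a₀) (ha : ∀ k, 0 < a k)
    (hrel : ∑ k, (a k : ℂ) • ((Hs k).subtypeL ∘L Submodule.orthogonalProjectionOnto (Hs k))
      = (a₀ : ℂ) • ContinuousLinearMap.id ℂ H)
    (hirr : ∀ X : H →L[ℂ] H,
      (∀ k, X ∘L ((Hs k).subtypeL ∘L Submodule.orthogonalProjectionOnto (Hs k))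
          = ((Hs k).subtypeL ∘L Submodule.orthogonalProjectionOnto (Hs k)) ∘L X) →
      ∃ c : ℂ, X = c • ContinuousLinearMap.id ℂ H) :
    ∀ X : H →ₗ[ℂ] H, (∀ k, ∀ x ∈ Hs k, X x ∈ Hs k) →
      ∃ c : ℂ, X = c • LinearMap.id := by
  intro X hX
  set P : Fin n → H →L[ℂ] H := fun k => (Hs k).subtypeL ∘L Submodule.orthogonalProjectionOnto (Hs k) with hP
  -- linear map versions
  set Q : Fin n → H →ₗ[ℂ] H := fun k => (P k : H →ₗ[ℂ] H) with hQ
  have hQmem : ∀ k x, Q k x ∈ Hs k := fun k x => ((Submodule.orthogonalProjectionOnto (Hs k)) x).2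
  have hQfix : ∀ k x, x ∈ Hs k → Q k x = x := by
    intro k x hx
    simp only [hQ, hP, ContinuousLinearMap.coe_coe, ContinuousLinearMap.comp_apply,
      Submodule.subtypeL_apply]
    rw [← Submodule.starProjection_apply, Submodule.starProjection_eq_self_iff.mpr hx]
  have hQQ : ∀ k, Q k * Q k = Q k := by
    intro k; ext x
    exact hQfix k (Q k x) (hQmem k x)
  -- invariance: Q k X Q k = X Q k
  have hinv : ∀ k, Q k * X * Q k = X * Q k := by
    intro k; ext x
    exact hQfix k (X (Q k x)) (hX k _ (hQmem k x))
  -- self-adjointness of Q k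
  have hQadj : ∀ k, LinearMap.adjoint (Q k) = Q k := by
    intro k
    refine ((LinearMap.eq_adjoint_iff (Q k) (Q k)).mpr ?_).symm
    intro x y
    simpa [hQ, hP] using Submodule.inner_starProjection_left_eq_right (Hs k) x y
  -- the sum relation for linear maps
  have hrelL : ∑ k, (a k : ℂ) • Q k = (a₀ : ℂ) • (1 : H →ₗ[ℂ] H) := by
    ext x
    have := congrArg (fun (T : H →L[ℂ] H) => T x) hrel
    simpa [hQ, hP] using this
  -- commutators
  set C : Fin n → H →ₗ[ℂ] H := fun k => Q k * X - X * Q k with hC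
  have hsumC : ∑ k, (a k : ℂ) • C k = 0 := by
    have h1 : ∑ k, (a k : ℂ) • (Q k * X) = (a₀ : ℂ) • X := by
      calc ∑ k, (a k : ℂ) • (Q k * X) = (∑ k, (a k : ℂ) • Q k) * X := by
            rw [Finset.sum_mul]; simp only [smul_mul_assoc]
        _ = (a₀ : ℂ) • X := by rw [hrelL, smul_mul_assoc, one_mul]
    have h2 : ∑ k, (a k : ℂ) • (X * Q k) = (a₀ : ℂ) • X := by
      calc ∑ k, (a k : ℂ) • (X * Q k) = X * ∑ k, (a k : ℂ) • Q k := by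
            rw [Finset.mul_sum]; simp only [mul_smul_comm]
        _ = (a₀ : ℂ) • X := by rw [hrelL, mul_smul_comm, mul_one]
    simp only [hC, smul_sub, Finset.sum_sub_distrib, h1, h2, sub_self]
  -- C k * Q k = 0 and Q k * C k = C k
  have hCQ : ∀ k, C k * Q k = 0 := by
    intro k
    simp only [hC, sub_mul, mul_assoc, hQQ k]
    rw [← mul_assoc, hinv k, sub_self]
  have hQC : ∀ k, Q k * C k = C k := by
    intro k
    simp only [hC, mul_sub]
    rw [← mul_assoc, hQQ k, ← mul_assoc, hinv k]
  -- adjoint of C k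
  have hCadj : ∀ k, LinearMap.adjoint (C k) =
      LinearMap.adjoint X * Q k - Q k * LinearMap.adjoint X := by
    intro k
    simp only [hC, map_sub, Module.End.mul_eq_comp, LinearMap.adjoint_comp, hQadj k]
  -- trace computation: trace (C k * adjoint (C k)) = trace (C k * adjoint X)
  have htr : ∀ k, LinearMap.trace ℂ H (C k * LinearMap.adjoint (C k))
      = LinearMap.trace ℂ H (C k * LinearMap.adjoint X) := by
    intro k
    have e1 : C k * (Q k * LinearMap.adjoint X) = 0 := by
      rw [← mul_assoc, hCQ k, zero_mul]
    have e2 : C k * (LinearMap.adjoint X * Q k) = C k * LinearMap.adjoint X * Q k :=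
      (mul_assoc _ _ _).symm
    rw [hCadj k, mul_sub, map_sub, e1, map_zero, sub_zero, e2,
      LinearMap.trace_mul_comm ℂ (C k * LinearMap.adjoint X) (Q k), ← mul_assoc, hQC k]
  -- total sum of traces is zero
  have hsumtr : ∑ k, (a k : ℂ) * LinearMap.trace ℂ H (C k * LinearMap.adjoint (C k)) = 0 := by
    calc ∑ k, (a k : ℂ) * LinearMap.trace ℂ H (C k * LinearMap.adjoint (C k))
        = ∑ k, LinearMap.trace ℂ H (((a k : ℂ) • C k) * LinearMap.adjoint X) := by
          refine Finset.sum_congr rfl fun k _ => ?_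
          rw [htr k, smul_mul_assoc, map_smul, smul_eq_mul]
      _ = LinearMap.trace ℂ H ((∑ k, (a k : ℂ) • C k) * LinearMap.adjoint X) := by
          rw [Finset.sum_mul, map_sum]
      _ = 0 := by rw [hsumC, zero_mul, map_zero]
  -- each trace is a nonneg real; conclude each C k = 0
  have htr_nonneg : ∀ k, ∃ t : ℝ, 0 ≤ t ∧
      LinearMap.trace ℂ H (C k * LinearMap.adjoint (C k)) = (t : ℂ) := by
    intro k
    rw [LinearMap.trace_mul_comm]
    refine ⟨∑ i, ‖C k ((stdOrthonormalBasis ℂ H) i)‖ ^ 2,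
      Finset.sum_nonneg fun i _ => sq_nonneg _, ?_⟩
    rw [trace_eq_sum_inner' (stdOrthonormalBasis ℂ H), Complex.ofReal_sum]
    refine Finset.sum_congr rfl fun i _ => ?_
    rw [Module.End.mul_apply, LinearMap.adjoint_inner_right, inner_self_eq_norm_sq_to_K]
    norm_cast
  have hCzero : ∀ k, C k = 0 := by
    choose t ht htc using htr_nonneg
    have hre : ∑ k, a k * t k = 0 := by
      have hcast : ((∑ k, a k * t k : ℝ) : ℂ) = 0 := by
        rw [Complex.ofReal_sum, ← hsumtr]
        refine Finset.sum_congr rfl fun k _ => ?_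
        rw [htc k, Complex.ofReal_mul]
      exact_mod_cast hcast
    have hz : ∀ k ∈ Finset.univ, a k * t k = 0 :=
      (Finset.sum_eq_zero_iff_of_nonneg
        (fun k _ => mul_nonneg (ha k).le (ht k))).mp hre
    intro k
    have htk : t k = 0 := by
      have := hz k (Finset.mem_univ k)
      rcases mul_eq_zero.mp this with h | h
      · exact absurd h (ha k).ne'
      · exact h
    apply eq_zero_of_trace_adjoint_mul_self
    rw [LinearMap.trace_mul_comm, htc k, htk]
    simp
  -- now X commutes with all P k
  set X' : H →L[ℂ] H := LinearMap.toContinuousLinearMap X with hX'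
  have hcomm : ∀ k, X' ∘L P k = P k ∘L X' := by
    intro k
    ext x
    have := congrArg (fun (T : H →ₗ[ℂ] H) => T x) (hCzero k)
    simp only [hC, LinearMap.sub_apply, Module.End.mul_apply, LinearMap.zero_apply] at this
    have h : Q k (X x) = X (Q k x) := sub_eq_zero.mp this
    simpa [hX', hQ] using h.symm
  obtain ⟨c, hc⟩ := hirr X' hcomm
  refine ⟨c, ?_⟩
  ext x
  have := congrArg (fun (T : H →L[ℂ] H) => T x) hc
  simpa [hX'] using this
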